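/- Let R be a rewrite system on T. If (t₁,t₂) is a critical pair of →_R, then either (t₁,t₂) resolves, or there is an overlap between two rules of R (of one of the five types) whose resulting critical pair (c₁,c₂) has the property that if (c₁,c₂) resolves then (t₁,t₂) resolves. -/

import Mathlib

variable {Γ Δ : Type} [Quiver.{0} Δ] {X : Γ → Type} {F : Γ → Δ}

/-- The set `T := ⨆_{B} ⨆_{A} XA × 𝒫(FA, B)` of tagged words `x|p`. -/
def Tagged (X : Γ → Type) (F : Γ → Δ) : Type :=
  Σ (B : Δ) (A : Γ), X A × Quiver.Path (F A) B

namespace Tagged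

/-- `τ(x|p) := tgt p`. -/
abbrev tau (t : Tagged X F) : Δ := t.1

/-- The action `(x|p)·q := x|pq` of a path `q` with `src q = τ t`. -/
def act (t : Tagged X F) {B B' : Δ} (h : t.tau = B) (q : Quiver.Path B B') : Tagged X F :=
  ⟨B', t.2.1, t.2.2.1, Quiver.Path.comp (h ▸ t.2.2.2 : Quiver.Path (F t.2.1) B) q⟩

end Tagged

/-- Pairs of parallel paths (same source and same target). -/
def PathPair (Δ : Type) [Quiver.{0} Δ] : Type :=
  Σ (a b : Δ), Quiver.Path a b × Quiver.Path a b

/-- The reduction relation `→_R` generated by a rewrite system `R = (R_T, R_P)` on `T`. -/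
inductive Red (RT : Set (Tagged X F × Tagged X F)) (RP : Set (PathPair Δ)) :
    Tagged X F → Tagged X F → Prop
  | tag {s u : Tagged X F} {B B' : Δ} (hmem : (s, u) ∈ RT)
      (hs : s.tau = B) (hu : u.tau = B) (q : Quiver.Path B B') :
      Red RT RP (s.act hs q) (u.act hu q)
  | path {s : Tagged X F} {a b B' : Δ} {l r : Quiver.Path a b}
      (hmem : (⟨a, b, (l, r)⟩ : PathPair Δ) ∈ RP)
      (hs : s.tau = a) (q : Quiver.Path b B') :
      Red RT RP (s.act hs (l.comp q)) (s.act hs (r.comp q))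

/-- One-step path rewriting with respect to the two-sided rules `R_P`. -/
def RedPath (RP : Set (PathPair Δ)) {a b : Δ} (p₁ p₂ : Quiver.Path a b) : Prop :=
  ∃ (c d : Δ) (l r : Quiver.Path c d) (u : Quiver.Path a c) (v : Quiver.Path d b),
    (⟨c, d, (l, r)⟩ : PathPair Δ) ∈ RP ∧ p₁ = (u.comp l).comp v ∧ p₂ = (u.comp r).comp v

/-- A pair of elements of `T` resolves if both reduce (in `→*_R`) to a common term. -/
def ResolvesT (RT : Set (Tagged X F × Tagged X F)) (RP : Set (PathPair Δ))
    (t₁ t₂ : Tagged X F) : Prop :=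
  ∃ v, Relation.ReflTransGen (Red RT RP) t₁ v ∧ Relation.ReflTransGen (Red RT RP) t₂ v

/-- A pair of parallel paths resolves if both reduce (via the rules `R_P`)
to a common path. -/
def ResolvesP (RP : Set (PathPair Δ)) {a b : Δ} (p₁ p₂ : Quiver.Path a b) : Prop :=
  ∃ w : Quiver.Path a b,
    Relation.ReflTransGen (fun p q => RedPath RP p q) p₁ w ∧
    Relation.ReflTransGen (fun p q => RedPath RP p q) p₂ w

/-- `(c₁, c₂)` is the critical pair in `T` resulting from an overlap of two rules of `R`,
of types (i), (iv) or (v). -/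
def OverlapPairT (RT : Set (Tagged X F × Tagged X F)) (RP : Set (PathPair Δ))
    (c₁ c₂ : Tagged X F) : Prop :=
  -- type (i): s₁ = s₂·q, resulting pair (u₁, u₂·q)
  (∃ (s₁ u₁ s₂ u₂ : Tagged X F) (B B' : Δ) (h₂ : s₂.tau = B) (hu₂ : u₂.tau = B)
      (q : Quiver.Path B B'),
      (s₁, u₁) ∈ RT ∧ (s₂, u₂) ∈ RT ∧ s₁ = s₂.act h₂ q ∧ c₁ = u₁ ∧ c₂ = u₂.act hu₂ q) ∨
  -- type (iv): s₁·q = s·l, resulting pair (u₁·q, s·r)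
  (∃ (s₁ u₁ s : Tagged X F) (a b B : Δ) (l r : Quiver.Path a b)
      (hs₁ : s₁.tau = B) (hu₁ : u₁.tau = B) (q : Quiver.Path B b) (hs : s.tau = a),
      (s₁, u₁) ∈ RT ∧ (⟨a, b, (l, r)⟩ : PathPair Δ) ∈ RP ∧
      s₁.act hs₁ q = s.act hs l ∧ c₁ = u₁.act hu₁ q ∧ c₂ = s.act hs r) ∨
  -- type (v): s₁ = s·(lq), resulting pair (u₁, s·(rq))
  (∃ (s₁ u₁ s : Tagged X F) (a b B : Δ) (l r : Quiver.Path a b)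
      (hs : s.tau = a) (q : Quiver.Path b B),
      (s₁, u₁) ∈ RT ∧ (⟨a, b, (l, r)⟩ : PathPair Δ) ∈ RP ∧
      s₁ = s.act hs (l.comp q) ∧ c₁ = u₁ ∧ c₂ = s.act hs (r.comp q))

/-- `(c₁, c₂)` is the critical pair of paths resulting from an overlap of two rules
of `R_P`, of type (ii) or (iii). -/
def OverlapPairP (RP : Set (PathPair Δ)) {a b : Δ} (c₁ c₂ : Quiver.Path a b) : Prop :=
  -- type (ii): l₁ = p l₂ q, resulting pair (r₁, p r₂ q)
  (∃ (l₁ r₁ : Quiver.Path a b) (a₂ b₂ : Δ) (l₂ r₂ : Quiver.Path a₂ b₂)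
      (p : Quiver.Path a a₂) (q : Quiver.Path b₂ b),
      (⟨a, b, (l₁, r₁)⟩ : PathPair Δ) ∈ RP ∧ (⟨a₂, b₂, (l₂, r₂)⟩ : PathPair Δ) ∈ RP ∧
      l₁ = (p.comp l₂).comp q ∧ c₁ = r₁ ∧ c₂ = (p.comp r₂).comp q) ∨
  -- type (iii): l₁ q = p l₂, resulting pair (r₁ q, p r₂)
  (∃ (b₁ a₂ : Δ) (l₁ r₁ : Quiver.Path a b₁) (l₂ r₂ : Quiver.Path a₂ b)
      (q : Quiver.Path b₁ b) (p : Quiver.Path a a₂),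
      (⟨a, b₁, (l₁, r₁)⟩ : PathPair Δ) ∈ RP ∧ (⟨a₂, b, (l₂, r₂)⟩ : PathPair Δ) ∈ RP ∧
      l₁.comp q = p.comp l₂ ∧ c₁ = r₁.comp q ∧ c₂ = p.comp r₂)

lemma path_compare {a : Δ} : ∀ {B₂ C : Δ} (p₂ : Quiver.Path a B₂) (q₂ : Quiver.Path B₂ C)
    {B₁ : Δ} (p₁ : Quiver.Path a B₁) (q₁ : Quiver.Path B₁ C),
    p₁.comp q₁ = p₂.comp q₂ →
    (∃ m : Quiver.Path B₁ B₂, q₁ = m.comp q₂ ∧ p₂ = p₁.comp m) ∨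
    (∃ m : Quiver.Path B₂ B₁, q₂ = m.comp q₁ ∧ p₁ = p₂.comp m)
  | _, _, p₂, Quiver.Path.nil, B₁, p₁, q₁, h => by
    left; exact ⟨q₁, (Quiver.Path.comp_nil q₁).symm, by simpa using h.symm⟩
  | _, _, p₂, Quiver.Path.cons q₂ e, B₁, p₁, q₁, h => by
    cases q₁ with
    | nil => right; exact ⟨Quiver.Path.cons q₂ e, (Quiver.Path.comp_nil _).symm, by simpa using h⟩
    | cons q₁' e' =>
      rw [Quiver.Path.comp_cons, Quiver.Path.comp_cons] at h
      obtain ⟨rfl, h1, h2⟩ := Quiver.Path.cons.inj h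
      rw [heq_iff_eq] at h1 h2; subst h2
      rcases path_compare p₂ q₂ p₁ q₁' h1 with ⟨m, rfl, rfl⟩ | ⟨m, rfl, rfl⟩
      · exact Or.inl ⟨m, by rw [Quiver.Path.comp_cons], rfl⟩
      · exact Or.inr ⟨m, by rw [Quiver.Path.comp_cons], rfl⟩

def mk' (A : Γ) (x : X A) {B : Δ} (p : Quiver.Path (F A) B) : Tagged X F := ⟨B, A, x, p⟩

lemma tau_mk' {A : Γ} {x : X A} {B : Δ} (p : Quiver.Path (F A) B) :
    (mk' A x p).tau = B := rfl

lemma act_mk' {A : Γ} {x : X A} {B B' : Δ} (p : Quiver.Path (F A) B)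
    (h : (mk' A x p : Tagged X F).tau = B) (q : Quiver.Path B B') :
    (mk' A x p).act h q = mk' A x (p.comp q) := rfl

lemma mk'_congr {A : Γ} {x : X A} {B : Δ} {p p' : Quiver.Path (F A) B} (h : p = p') :
    (mk' A x p : Tagged X F) = mk' A x p' := by rw [h]

lemma exists_rep (t : Tagged X F) {B : Δ} (h : t.tau = B) :
    ∃ (A : Γ) (x : X A) (p : Quiver.Path (F A) B), t = mk' A x p := by
  obtain ⟨B₀, A, x, p⟩ := t
  subst h
  exact ⟨A, x, p, rfl⟩

lemma act_act (t : Tagged X F) {B B' B'' : Δ} (h : t.tau = B) (q : Quiver.Path B B')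
    (h' : (t.act h q).tau = B') (q' : Quiver.Path B' B'') :
    (t.act h q).act h' q' = t.act h (q.comp q') := by
  obtain ⟨A, x, p, rfl⟩ := exists_rep t h
  show mk' A x ((p.comp q).comp q') = mk' A x (p.comp (q.comp q'))
  rw [Quiver.Path.comp_assoc]

lemma Red.tau_eq {RT : Set (Tagged X F × Tagged X F)} {RP : Set (PathPair Δ)}
    {t₁ t₂ : Tagged X F} (h : Red RT RP t₁ t₂) : t₁.tau = t₂.tau := by
  cases h <;> rfl

lemma red_act {RT : Set (Tagged X F × Tagged X F)} {RP : Set (PathPair Δ)}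
    {a b : Tagged X F} (h : Red RT RP a b) {B B' : Δ}
    (ha : a.tau = B) (hb : b.tau = B) (q : Quiver.Path B B') :
    Red RT RP (a.act ha q) (b.act hb q) := by
  cases h with
  | tag hmem hs hu q₁ =>
    subst ha
    erw [act_act, act_act]
    exact Red.tag hmem hs hu _
  | path hmem hs q₁ =>
    subst ha
    erw [act_act, act_act, Quiver.Path.comp_assoc, Quiver.Path.comp_assoc]
    exact Red.path hmem hs _

lemma rtg_tau {RT : Set (Tagged X F × Tagged X F)} {RP : Set (PathPair Δ)}
    {a v : Tagged X F} (h : Relation.ReflTransGen (Red RT RP) a v) : a.tau = v.tau := by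
  induction h with
  | refl => rfl
  | tail hab hstep ih => exact ih.trans hstep.tau_eq

lemma rtg_act {RT : Set (Tagged X F × Tagged X F)} {RP : Set (PathPair Δ)}
    {a v : Tagged X F} (h : Relation.ReflTransGen (Red RT RP) a v)
    {B B' : Δ} (ha : a.tau = B) (q : Quiver.Path B B') :
    ∀ (hv : v.tau = B), Relation.ReflTransGen (Red RT RP) (a.act ha q) (v.act hv q) := by
  induction h with
  | refl => exact fun hv => Relation.ReflTransGen.refl
  | tail hab hstep ih =>
    exact fun hv => (ih (hstep.tau_eq.trans hv)).tail (red_act hstep _ hv q)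

lemma resolvesT_symm {RT : Set (Tagged X F × Tagged X F)} {RP : Set (PathPair Δ)}
    {t₁ t₂ : Tagged X F} (h : ResolvesT RT RP t₁ t₂) : ResolvesT RT RP t₂ t₁ := by
  obtain ⟨v, h₁, h₂⟩ := h; exact ⟨v, h₂, h₁⟩

lemma resolvesT_act {RT : Set (Tagged X F × Tagged X F)} {RP : Set (PathPair Δ)}
    {t₁ t₂ : Tagged X F} (h : ResolvesT RT RP t₁ t₂)
    {B B' : Δ} (h₁ : t₁.tau = B) (h₂ : t₂.tau = B) (q : Quiver.Path B B') :
    ResolvesT RT RP (t₁.act h₁ q) (t₂.act h₂ q) := by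
  obtain ⟨v, hv₁, hv₂⟩ := h
  exact ⟨v.act ((rtg_tau hv₁).symm.trans h₁) q,
    rtg_act hv₁ h₁ q _, rtg_act hv₂ h₂ q _⟩

lemma redPath_comp_right {RP : Set (PathPair Δ)} {a b c : Δ}
    {p p' : Quiver.Path a b} (h : RedPath RP p p') (q : Quiver.Path b c) :
    RedPath RP (p.comp q) (p'.comp q) := by
  obtain ⟨cc, d, l, r, u, v, hm, rfl, rfl⟩ := h
  exact ⟨cc, d, l, r, u, v.comp q, hm,
    by rw [Quiver.Path.comp_assoc], by rw [Quiver.Path.comp_assoc]⟩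

lemma red_of_redPath {RT : Set (Tagged X F × Tagged X F)} {RP : Set (PathPair Δ)}
    (s : Tagged X F) {aa b : Δ} (hs : s.tau = aa)
    {p p' : Quiver.Path aa b} (h : RedPath RP p p') :
    Red RT RP (s.act hs p) (s.act hs p') := by
  obtain ⟨c, d, l, r, u, v, hm, rfl, rfl⟩ := h
  have h1 : (s.act hs u).tau = c := rfl
  have h2 := Red.path (RT := RT) hm h1 v
  rwa [act_act, act_act, ← Quiver.Path.comp_assoc, ← Quiver.Path.comp_assoc] at h2

lemma resolvesT_of_resolvesP {RT : Set (Tagged X F × Tagged X F)} {RP : Set (PathPair Δ)}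
    (s : Tagged X F) {aa b B' : Δ} (hs : s.tau = aa)
    {c₁ c₂ : Quiver.Path aa b} (h : ResolvesP RP c₁ c₂) (q : Quiver.Path b B') :
    ResolvesT RT RP (s.act hs (c₁.comp q)) (s.act hs (c₂.comp q)) := by
  obtain ⟨w, hw₁, hw₂⟩ := h
  refine ⟨s.act hs (w.comp q), ?_, ?_⟩
  · exact Relation.ReflTransGen.lift (fun p => s.act hs (p.comp q))
      (fun a b hab => red_of_redPath s hs (redPath_comp_right hab q)) _ _ hw₁
  · exact Relation.ReflTransGen.lift (fun p => s.act hs (p.comp q))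
      (fun a b hab => red_of_redPath s hs (redPath_comp_right hab q)) _ _ hw₂

def Concl (RT : Set (Tagged X F × Tagged X F)) (RP : Set (PathPair Δ))
    (t₁ t₂ : Tagged X F) : Prop :=
  ResolvesT RT RP t₁ t₂ ∨
    (∃ c₁ c₂ : Tagged X F, OverlapPairT RT RP c₁ c₂ ∧
        (ResolvesT RT RP c₁ c₂ → ResolvesT RT RP t₁ t₂)) ∨
    (∃ (a b : Δ) (c₁ c₂ : Quiver.Path a b), OverlapPairP RP c₁ c₂ ∧
        (ResolvesP RP c₁ c₂ → ResolvesT RT RP t₁ t₂))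

lemma concl_symm {RT : Set (Tagged X F × Tagged X F)} {RP : Set (PathPair Δ)}
    {t₁ t₂ : Tagged X F} (h : Concl RT RP t₁ t₂) : Concl RT RP t₂ t₁ := by
  rcases h with h | ⟨c₁, c₂, ho, hi⟩ | ⟨a, b, c₁, c₂, ho, hi⟩
  · exact Or.inl (resolvesT_symm h)
  · exact Or.inr (Or.inl ⟨c₁, c₂, ho, fun hr => resolvesT_symm (hi hr)⟩)
  · exact Or.inr (Or.inr ⟨a, b, c₁, c₂, ho, fun hr => resolvesT_symm (hi hr)⟩)

lemma aux_tagtag {RT : Set (Tagged X F × Tagged X F)} {RP : Set (PathPair Δ)}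
    {A : Γ} {x : X A} {B₁ B₂ B' : Δ}
    {p₁ : Quiver.Path (F A) B₁} {p₂ : Quiver.Path (F A) B₂}
    {u₁ u₂ : Tagged X F} (hu₁ : u₁.tau = B₁) (hu₂ : u₂.tau = B₂)
    (h₁ : ((mk' A x p₁ : Tagged X F), u₁) ∈ RT)
    (h₂ : ((mk' A x p₂ : Tagged X F), u₂) ∈ RT)
    (m : Quiver.Path B₁ B₂) (q₂ : Quiver.Path B₂ B')
    (hp : p₂ = p₁.comp m) :
    Concl RT RP (u₁.act hu₁ (m.comp q₂)) (u₂.act hu₂ q₂) := by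
  refine Or.inr (Or.inl ⟨u₂, u₁.act hu₁ m,
    Or.inl ⟨mk' A x p₂, u₂, mk' A x p₁, u₁, B₁, B₂, rfl, hu₁, m, h₂, h₁, ?_, rfl, rfl⟩, ?_⟩)
  · erw [act_mk', hp]
  · intro hr
    have h3 := resolvesT_act hr hu₂ rfl q₂
    erw [act_act] at h3
    exact resolvesT_symm h3

lemma aux_tagpath {RT : Set (Tagged X F × Tagged X F)} {RP : Set (PathPair Δ)}
    {A : Γ} {x : X A} {B₁ B' a b : Δ}
    {p₁ : Quiver.Path (F A) B₁} {u₁ : Tagged X F} (hu₁ : u₁.tau = B₁)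
    (hmem₁ : ((mk' A x p₁ : Tagged X F), u₁) ∈ RT)
    {l r : Quiver.Path a b} (hmem₂ : (⟨a, b, (l, r)⟩ : PathPair Δ) ∈ RP)
    {p : Quiver.Path (F A) a} (q₁ : Quiver.Path B₁ B') (q : Quiver.Path b B')
    (heq : p₁.comp q₁ = p.comp (l.comp q)) :
    Concl RT RP (u₁.act hu₁ q₁) ((mk' A x p).act rfl (r.comp q)) := by
  rcases path_compare p (l.comp q) p₁ q₁ heq with ⟨m, rfl, hp⟩ | ⟨m, hm, rfl⟩
  · -- q₁ = m.comp (l.comp q), p = p₁.comp m : type (iv) with overlap path m.comp l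
    refine Or.inr (Or.inl ⟨u₁.act hu₁ (m.comp l), (mk' A x p).act rfl r,
      Or.inr (Or.inl ⟨mk' A x p₁, u₁, mk' A x p, a, b, B₁, l, r, rfl, hu₁, m.comp l, rfl,
        hmem₁, hmem₂, ?_, rfl, rfl⟩), ?_⟩)
    · erw [act_mk', act_mk', hp, Quiver.Path.comp_assoc]
    · intro hr
      have h3 := resolvesT_act hr rfl rfl q
      erw [act_act, act_act, Quiver.Path.comp_assoc] at h3
      exact h3
  · rcases path_compare m q₁ l q hm with ⟨k, rfl, rfl⟩ | ⟨k, rfl, rfl⟩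
    · -- q = k.comp q₁, m = l.comp k : type (v)
      refine Or.inr (Or.inl ⟨u₁, (mk' A x p).act rfl (r.comp k),
        Or.inr (Or.inr ⟨mk' A x (p.comp (l.comp k)), u₁, mk' A x p, a, b, B₁, l, r, rfl, k,
          hmem₁, hmem₂, rfl, rfl, rfl⟩), ?_⟩)
      intro hr
      have h3 := resolvesT_act hr hu₁ rfl q₁
      erw [act_act, Quiver.Path.comp_assoc] at h3
      exact h3
    · -- q₁ = k.comp q, l = m.comp k : type (iv)
      refine Or.inr (Or.inl ⟨u₁.act hu₁ k, (mk' A x p).act rfl r,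
        Or.inr (Or.inl ⟨mk' A x (p.comp m), u₁, mk' A x p, a, b, B₁, m.comp k, r, rfl, hu₁, k, rfl,
          hmem₁, hmem₂, ?_, rfl, rfl⟩), ?_⟩)
      · erw [act_mk', act_mk', Quiver.Path.comp_assoc]
      · intro hr
        have h3 := resolvesT_act hr rfl rfl q
        erw [act_act, act_act] at h3
        exact h3

lemma aux_pathpath' {RT : Set (Tagged X F × Tagged X F)} {RP : Set (PathPair Δ)}
    {A : Γ} {x : X A} {a₁ b₁ a₂ b₂ B' : Δ}
    {l₁ r₁ : Quiver.Path a₁ b₁} {l₂ r₂ : Quiver.Path a₂ b₂}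
    (hm₁ : (⟨a₁, b₁, (l₁, r₁)⟩ : PathPair Δ) ∈ RP)
    (hm₂ : (⟨a₂, b₂, (l₂, r₂)⟩ : PathPair Δ) ∈ RP)
    {p₁ : Quiver.Path (F A) a₁} {p₂ : Quiver.Path (F A) a₂}
    (m : Quiver.Path b₁ b₂) (q₂ : Quiver.Path b₂ B')
    (hp : p₂.comp l₂ = (p₁.comp l₁).comp m) :
    Concl RT RP ((mk' A x p₁).act rfl (r₁.comp (m.comp q₂)))
      ((mk' A x p₂).act rfl (r₂.comp q₂)) := by
  rw [Quiver.Path.comp_assoc] at hp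
  rcases path_compare p₁ (l₁.comp m) p₂ l₂ hp with ⟨n, hn, rfl⟩ | ⟨n, hn, rfl⟩
  · -- l₂ = n.comp (l₁.comp m), p₁ = p₂.comp n : type (ii)
    refine Or.inr (Or.inr ⟨a₂, b₂, r₂, (n.comp r₁).comp m,
      Or.inl ⟨l₂, r₂, a₁, b₁, l₁, r₁, n, m, hm₂, hm₁,
        by rw [hn, Quiver.Path.comp_assoc], rfl, rfl⟩, ?_⟩)
    intro hr
    have h3 := resolvesT_of_resolvesP (RT := RT) (mk' A x p₂) rfl hr q₂
    erw [act_mk', act_mk'] at h3 ⊢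
    simp only [Quiver.Path.comp_assoc] at h3 ⊢
    convert resolvesT_symm h3 using 1; exact mk'_congr (congrArg p₂.comp ((Quiver.Path.comp_assoc n _ q₂).trans (congrArg n.comp (Quiver.Path.comp_assoc r₁ m q₂))).symm)
    rfl
  · -- l₁.comp m = n.comp l₂, p₂ = p₁.comp n : type (iii)
    refine Or.inr (Or.inr ⟨a₁, b₂, r₁.comp m, n.comp r₂,
      Or.inr ⟨b₁, a₂, l₁, r₁, l₂, r₂, m, n, hm₁, hm₂, hn, rfl, rfl⟩, ?_⟩)
    intro hr
    have h3 := resolvesT_of_resolvesP (RT := RT) (mk' A x p₁) rfl hr q₂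
    erw [act_mk', act_mk'] at h3 ⊢
    simp only [Quiver.Path.comp_assoc] at h3 ⊢
    convert h3 using 1 <;> exact mk'_congr (congrArg p₁.comp (Quiver.Path.comp_assoc _ _ _).symm)

lemma aux_pathpath {RT : Set (Tagged X F × Tagged X F)} {RP : Set (PathPair Δ)}
    {A : Γ} {x : X A} {a₁ b₁ a₂ b₂ B' : Δ}
    {l₁ r₁ : Quiver.Path a₁ b₁} {l₂ r₂ : Quiver.Path a₂ b₂}
    (hm₁ : (⟨a₁, b₁, (l₁, r₁)⟩ : PathPair Δ) ∈ RP)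
    (hm₂ : (⟨a₂, b₂, (l₂, r₂)⟩ : PathPair Δ) ∈ RP)
    {p₁ : Quiver.Path (F A) a₁} {p₂ : Quiver.Path (F A) a₂}
    (q₁ : Quiver.Path b₁ B') (q₂ : Quiver.Path b₂ B')
    (heq : p₁.comp (l₁.comp q₁) = p₂.comp (l₂.comp q₂)) :
    Concl RT RP ((mk' A x p₁).act rfl (r₁.comp q₁)) ((mk' A x p₂).act rfl (r₂.comp q₂)) := by
  rw [← Quiver.Path.comp_assoc, ← Quiver.Path.comp_assoc] at heq
  rcases path_compare (p₂.comp l₂) q₂ (p₁.comp l₁) q₁ heq with ⟨m, rfl, hp⟩ | ⟨m, rfl, hp⟩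
  · exact aux_pathpath' hm₁ hm₂ m q₂ hp
  · exact concl_symm (aux_pathpath' hm₂ hm₁ m q₁ hp)

lemma mk'_inj {B C : Δ} {A A' : Γ} {x : X A} {x' : X A'}
    {p : Quiver.Path (F A) B} {p' : Quiver.Path (F A') C}
    (h : (mk' A x p : Tagged X F) = mk' A' x' p') :
    ∃ (_ : B = C) (_ : A = A'), HEq x x' ∧ HEq p p' := by
  simp only [mk'] at h
  injection h with h1 h2
  subst h1
  have h2' := eq_of_heq h2
  injection h2' with h3 h4
  subst h3
  have h4' := eq_of_heq h4
  injection h4' with h5 h6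
  exact ⟨rfl, rfl, heq_of_eq h5, heq_of_eq h6⟩

lemma red_cases {RT : Set (Tagged X F × Tagged X F)} {RP : Set (PathPair Δ)}
    {t₁ t₂ : Tagged X F} (h : Red RT RP t₁ t₂) :
    (∃ (s u : Tagged X F) (B B' : Δ) (hs : s.tau = B) (hu : u.tau = B)
        (q : Quiver.Path B B'),
      (s, u) ∈ RT ∧ t₁ = s.act hs q ∧ t₂ = u.act hu q) ∨
    (∃ (s : Tagged X F) (a b B' : Δ) (l r : Quiver.Path a b) (hs : s.tau = a)
        (q : Quiver.Path b B'),
      (⟨a, b, (l, r)⟩ : PathPair Δ) ∈ RP ∧ t₁ = s.act hs (l.comp q) ∧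
        t₂ = s.act hs (r.comp q)) := by
  cases h with
  | tag hmem hs hu q => exact Or.inl ⟨_, _, _, _, hs, hu, q, hmem, rfl, rfl⟩
  | path hmem hs q => exact Or.inr ⟨_, _, _, _, _, _, hs, q, hmem, rfl, rfl⟩

/-- If `(t₁,t₂)` is a critical pair of `→_R`, then either it resolves, or there is an
overlap between two rules of `R` (of one of the five types) whose resulting critical
pair `(c₁,c₂)` is such that if `(c₁,c₂)` resolves then `(t₁,t₂)` resolves. -/
theorem stmt5 (RT : Set (Tagged X F × Tagged X F)) (RP : Set (PathPair Δ))
    (hRT : ∀ p ∈ RT, Tagged.tau p.1 = Tagged.tau p.2)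
    (t₁ t₂ : Tagged X F) (hcrit : ∃ t, Red RT RP t t₁ ∧ Red RT RP t t₂) :
    ResolvesT RT RP t₁ t₂ ∨
    (∃ c₁ c₂ : Tagged X F, OverlapPairT RT RP c₁ c₂ ∧
        (ResolvesT RT RP c₁ c₂ → ResolvesT RT RP t₁ t₂)) ∨
    (∃ (a b : Δ) (c₁ c₂ : Quiver.Path a b), OverlapPairP RP c₁ c₂ ∧
        (ResolvesP RP c₁ c₂ → ResolvesT RT RP t₁ t₂)) := by
  obtain ⟨t, h1, h2⟩ := hcrit
  suffices h : Concl RT RP t₁ t₂ by exact h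
  rcases red_cases h1 with ⟨s, u, B, B', hs, hu, q, hmem, rfl, rfl⟩ |
    ⟨s, a, b, B', l, r, hs, q, hmem, rfl, rfl⟩
  · obtain ⟨A, x, p, rfl⟩ := exists_rep s hs
    rcases red_cases h2 with ⟨s', u', B₂, B'₂, hs', hu', q', hmem', heq, rfl⟩ |
      ⟨s', a', b', B'₂, l', r', hs', q', hmem', heq, rfl⟩
    · -- tag / tag
      obtain ⟨A', x', p', rfl⟩ := exists_rep s' hs'
      rw [act_mk', act_mk'] at heq
      obtain ⟨rfl, rfl, hx, hp⟩ := mk'_inj heq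
      obtain rfl := eq_of_heq hx
      have heq := eq_of_heq hp
      rcases path_compare p' q' p q heq with ⟨m, rfl, rfl⟩ | ⟨m, rfl, rfl⟩
      · exact aux_tagtag hu hu' hmem hmem' m q' rfl
      · exact concl_symm (aux_tagtag hu' hu hmem' hmem m q rfl)
    · -- tag / path
      obtain ⟨A', x', p', rfl⟩ := exists_rep s' hs'
      rw [act_mk', act_mk'] at heq
      obtain ⟨rfl, rfl, hx, hp⟩ := mk'_inj heq
      obtain rfl := eq_of_heq hx
      have heq := eq_of_heq hp
      exact aux_tagpath hu hmem hmem' q q' heq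
  · obtain ⟨A, x, p, rfl⟩ := exists_rep s hs
    rcases red_cases h2 with ⟨s', u', B₂, B'₂, hs', hu', q', hmem', heq, rfl⟩ |
      ⟨s', a', b', B'₂, l', r', hs', q', hmem', heq, rfl⟩
    · -- path / tag
      obtain ⟨A', x', p', rfl⟩ := exists_rep s' hs'
      rw [act_mk', act_mk'] at heq
      obtain ⟨rfl, rfl, hx, hp⟩ := mk'_inj heq
      obtain rfl := eq_of_heq hx
      have heq := eq_of_heq hp
      exact concl_symm (aux_tagpath hu' hmem' hmem q' q heq.symm)
    · -- path / path
      obtain ⟨A', x', p', rfl⟩ := exists_rep s' hs'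
      rw [act_mk', act_mk'] at heq
      obtain ⟨rfl, rfl, hx, hp⟩ := mk'_inj heq
      obtain rfl := eq_of_heq hx
      have heq := eq_of_heq hp
      exact aux_pathpath hmem hmem' q q' heq
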